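/- Let N ≥ 1 and λ_1,…,λ_N ∈ ℝ with 0 < λ_l < 1/2 for every l. In the polynomial ring ℂ[z_1,…,z_N,ζ_1,…,ζ_N] set q_l = z_l·ζ_l + λ_l·(z_l² + ζ_l²) and T_l = ∂²/∂z_l∂ζ_l + λ_l·(∂²/∂z_l² + ∂²/∂ζ_l²) for l = 1,…,N. Then for every integer p ≥ 2 and every homogeneous polynomial P of degree p there exist homogeneous polynomials A_1,…,A_N of degree p−2 and a homogeneous polynomial P₀ of degree p such that P = Σ_{l=1}^N A_l·q_l + P₀ and T_l(P₀) = 0 for every l = 1,…,N. -/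

import Mathlib

noncomputable section

open MvPolynomial

set_option linter.unusedSectionVars false
set_option linter.unusedVariables false

namespace FischerAux
variable {σ : Type*} [Fintype σ] [DecidableEq σ]
set_option linter.unusedSectionVars false

def w (m : σ →₀ ℕ) : ℂ := ∏ i, (Nat.factorial (m i) : ℂ)

def BF (P Q : MvPolynomial σ ℂ) : ℂ := ∑ m ∈ P.support, w m * P.coeff m * Q.coeff m

lemma BF_eq_sum {P Q : MvPolynomial σ ℂ} {s : Finset (σ →₀ ℕ)} (hs : P.support ⊆ s) :
    BF P Q = ∑ m ∈ s, w m * P.coeff m * Q.coeff m :=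
  Finset.sum_subset hs (fun m _ hm => by
    rw [MvPolynomial.notMem_support_iff.1 hm, mul_zero, zero_mul])

lemma BF_comm (P Q : MvPolynomial σ ℂ) : BF P Q = BF Q P := by
  rw [BF_eq_sum (s := P.support ∪ Q.support) Finset.subset_union_left,
    BF_eq_sum (s := P.support ∪ Q.support) Finset.subset_union_right]
  exact Finset.sum_congr rfl fun m _ => by ring

lemma BF_add_left (P P' Q : MvPolynomial σ ℂ) : BF (P + P') Q = BF P Q + BF P' Q := by
  rw [BF_eq_sum (s := P.support ∪ P'.support) MvPolynomial.support_add,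
    BF_eq_sum (s := P.support ∪ P'.support) Finset.subset_union_left,
    BF_eq_sum (s := P.support ∪ P'.support) Finset.subset_union_right,
    ← Finset.sum_add_distrib]
  exact Finset.sum_congr rfl fun m _ => by rw [coeff_add]; ring

lemma BF_smul_left (c : ℂ) (P Q : MvPolynomial σ ℂ) : BF (c • P) Q = c * BF P Q := by
  rw [BF_eq_sum (s := P.support) (MvPolynomial.support_smul), BF, Finset.mul_sum]
  exact Finset.sum_congr rfl fun m _ => by rw [coeff_smul, smul_eq_mul]; ring

lemma BF_add_right (P Q Q' : MvPolynomial σ ℂ) : BF P (Q + Q') = BF P Q + BF P Q' := by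
  rw [BF_comm, BF_add_left, BF_comm Q P, BF_comm Q' P]

lemma BF_smul_right (c : ℂ) (P Q : MvPolynomial σ ℂ) : BF P (c • Q) = c * BF P Q := by
  rw [BF_comm, BF_smul_left, BF_comm]

lemma coeff_pderiv (i : σ) (m : σ →₀ ℕ) (Q : MvPolynomial σ ℂ) :
    coeff m (pderiv i Q) = ((m i : ℂ) + 1) * coeff (m + Finsupp.single i 1) Q := by
  induction Q using MvPolynomial.induction_on' with
  | add p q ih1 ih2 => rw [map_add, coeff_add, ih1, ih2, coeff_add, mul_add]
  | monomial s a =>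
    rw [pderiv_monomial, coeff_monomial, coeff_monomial]
    by_cases h : s = m + Finsupp.single i 1
    · subst h
      rw [if_pos (add_tsub_cancel_right _ _), if_pos rfl]
      simp [Finsupp.add_apply, Finsupp.single_eq_same]
      ring
    · rw [if_neg h, mul_zero]
      by_cases h2 : s - Finsupp.single i 1 = m
      · have hs : s i = 0 := by
          by_contra hne
          apply h
          ext j
          rw [Finsupp.add_apply, ← h2, Finsupp.tsub_apply, Finsupp.single_apply]
          by_cases hj : j = i
          · subst hj; rw [if_pos rfl]; omega
          · simp [Ne.symm hj, hj, Finsupp.single_apply]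
        rw [if_pos h2, hs]
        simp
      · rw [if_neg h2]

lemma pderiv_pderiv_comm (i j : σ) (Q : MvPolynomial σ ℂ) :
    pderiv i (pderiv j Q) = pderiv j (pderiv i Q) := by
  by_cases h : i = j
  · subst h; rfl
  · ext m
    rw [coeff_pderiv, coeff_pderiv, coeff_pderiv, coeff_pderiv]
    rw [show m + Finsupp.single j 1 + Finsupp.single i 1
        = m + Finsupp.single i 1 + Finsupp.single j 1 from add_right_comm _ _ _]
    simp only [Finsupp.add_apply, Finsupp.single_apply, if_neg h, if_neg (Ne.symm h)]
    push_cast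
    ring

lemma w_add_single (m : σ →₀ ℕ) (i : σ) :
    w (m + Finsupp.single i 1) = ((m i : ℂ) + 1) * w m := by
  unfold w
  rw [← Finset.prod_erase_mul _ _ (Finset.mem_univ i),
    ← Finset.prod_erase_mul _ _ (Finset.mem_univ i)]
  have h1 : ∀ j ∈ Finset.univ.erase i,
      (Nat.factorial ((m + Finsupp.single i 1 : σ →₀ ℕ) j) : ℂ) = (Nat.factorial (m j) : ℂ) := by
    intro j hj
    have hji := Finset.ne_of_mem_erase hj
    rw [Finsupp.add_apply, Finsupp.single_apply, if_neg (Ne.symm hji), add_zero]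
  rw [Finset.prod_congr rfl h1]
  have h2 : (m + Finsupp.single i 1 : σ →₀ ℕ) i = m i + 1 := by
    simp [Finsupp.add_apply, Finsupp.single_eq_same]
  rw [h2, Nat.factorial_succ]
  push_cast
  ring

lemma BF_X_mul (i : σ) (R Q : MvPolynomial σ ℂ) :
    BF (X i * R) Q = BF R (pderiv i Q) := by
  rw [BF_eq_sum (s := (X i * R).support) (le_refl _), support_X_mul, Finset.sum_map, BF]
  refine Finset.sum_congr rfl fun m hm => ?_
  simp only [addLeftEmbedding_apply]
  rw [coeff_X_mul, coeff_pderiv, show Finsupp.single i 1 + m = m + Finsupp.single i 1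
      from add_comm _ _, w_add_single]
  ring

end FischerAux
namespace FischerAux
variable {σ : Type*} [Fintype σ] [DecidableEq σ]

lemma eq_zero_of_BF_conj_self (P : MvPolynomial σ ℂ)
    (h : BF (MvPolynomial.map (starRingEnd ℂ) P) P = 0) : P = 0 := by
  rw [BF, support_map_of_injective _ (starRingEnd ℂ).injective] at h
  have hterm : ∀ m ∈ P.support, w m * coeff m (MvPolynomial.map (starRingEnd ℂ) P) * coeff m P
      = (((∏ j, (Nat.factorial (m j) : ℝ)) * Complex.normSq (coeff m P) : ℝ) : ℂ) := by
    intro m _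
    rw [coeff_map, w]
    push_cast
    rw [mul_assoc, show (starRingEnd ℂ) (coeff m P) * coeff m P
      = ((Complex.normSq (coeff m P) : ℝ) : ℂ) from by
        rw [mul_comm, Complex.mul_conj]]
  rw [Finset.sum_congr rfl hterm, ← Complex.ofReal_sum] at h
  have h2 : ∑ m ∈ P.support, (∏ j, (Nat.factorial (m j) : ℝ)) * Complex.normSq (coeff m P)
      = 0 := by exact_mod_cast h
  have h3 := (Finset.sum_eq_zero_iff_of_nonneg (fun m _ => mul_nonneg (Finset.prod_nonneg fun j _ => by positivity) (Complex.normSq_nonneg _))).1 h2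
  ext m
  rw [coeff_zero]
  by_cases hm : m ∈ P.support
  · have h4 := h3 m hm
    have h5 : (0:ℝ) < ∏ j, (Nat.factorial (m j) : ℝ) :=
      Finset.prod_pos fun j _ => by exact_mod_cast (m j).factorial_pos
    have h6 : Complex.normSq (coeff m P) = 0 := by
      rcases mul_eq_zero.1 h4 with h | h
      · exact absurd h h5.ne'
      · exact h
    exact Complex.normSq_eq_zero.1 h6
  · exact notMem_support_iff.1 hm

lemma isHomog_map_conj {P : MvPolynomial σ ℂ} {n : ℕ} (h : P.IsHomogeneous n) :
    (MvPolynomial.map (starRingEnd ℂ) P).IsHomogeneous n := by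
  intro d hd
  apply h
  rw [coeff_map] at hd
  intro h0
  exact hd (by rw [h0, map_zero])

lemma isHomog_pderiv {P : MvPolynomial σ ℂ} {n : ℕ} (h : P.IsHomogeneous n) (i : σ) :
    (pderiv i P).IsHomogeneous (n - 1) := by
  intro d hd
  rw [coeff_pderiv] at hd
  have h2 : coeff (d + Finsupp.single i 1) P ≠ 0 := right_ne_zero_of_mul hd
  have h3 := h h2
  rw [map_add] at h3
  have h4 : (Finsupp.weight 1) (Finsupp.single i 1) = 1 := by
    rw [Finsupp.weight_apply, Finsupp.sum_single_index] <;> simp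
  rw [h4] at h3
  omega

end FischerAux


/-- The quadric `q_l = z_l·ζ_l + λ_l·(z_l² + ζ_l²)` in `ℂ[z_1,…,z_N,ζ_1,…,ζ_N]`,
where `z_l = X (Sum.inl l)` and `ζ_l = X (Sum.inr l)`. -/
def qPoly (N : ℕ) (lam : Fin N → ℝ) (l : Fin N) : MvPolynomial (Fin N ⊕ Fin N) ℂ :=
  X (Sum.inl l) * X (Sum.inr l) + C ((lam l : ℂ)) * (X (Sum.inl l) ^ 2 + X (Sum.inr l) ^ 2)

/-- The Fischer differential operator
`T_l = ∂²/∂z_l∂ζ_l + λ_l·(∂²/∂z_l² + ∂²/∂ζ_l²)` associated to `q_l`. -/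
def fischerOp (N : ℕ) (lam : Fin N → ℝ) (l : Fin N)
    (P : MvPolynomial (Fin N ⊕ Fin N) ℂ) : MvPolynomial (Fin N ⊕ Fin N) ℂ :=
  pderiv (Sum.inl l) (pderiv (Sum.inr l) P) +
    C ((lam l : ℂ)) * (pderiv (Sum.inl l) (pderiv (Sum.inl l) P) +
      pderiv (Sum.inr l) (pderiv (Sum.inr l) P))

section Specialized
open FischerAux

variable {N : ℕ} {lam : Fin N → ℝ}

lemma qPoly_homog (l : Fin N) : (qPoly N lam l).IsHomogeneous 2 := by
  rw [qPoly]
  apply MvPolynomial.IsHomogeneous.add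
  · exact (isHomogeneous_X _ _).mul (isHomogeneous_X _ _)
  · exact ((isHomogeneous_X_pow _ _).add (isHomogeneous_X_pow _ _)).C_mul _

lemma map_conj_qPoly (l : Fin N) :
    MvPolynomial.map (starRingEnd ℂ) (qPoly N lam l) = qPoly N lam l := by
  simp [qPoly, map_add, map_mul, map_pow, Complex.conj_ofReal]

lemma fischerOp_homog {p : ℕ} {P : MvPolynomial (Fin N ⊕ Fin N) ℂ} (hP : P.IsHomogeneous p)
    (l : Fin N) : (fischerOp N lam l P).IsHomogeneous (p - 2) := by
  have key : ∀ i j : Fin N ⊕ Fin N,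
      (pderiv i (pderiv j P)).IsHomogeneous (p - 2) := by
    intro i j
    have := isHomog_pderiv (isHomog_pderiv hP j) i
    rwa [show p - 1 - 1 = p - 2 from by omega] at this
  rw [fischerOp]
  exact (key _ _).add (((key _ _).add (key _ _)).C_mul _)

lemma BF_q_mul (l : Fin N) (A Q : MvPolynomial (Fin N ⊕ Fin N) ℂ) :
    BF (qPoly N lam l * A) Q = BF A (fischerOp N lam l Q) := by
  have expand : qPoly N lam l * A
      = X (Sum.inl l) * (X (Sum.inr l) * A)
        + ((lam l : ℂ)) • (X (Sum.inl l) * (X (Sum.inl l) * A)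
          + X (Sum.inr l) * (X (Sum.inr l) * A)) := by
    rw [qPoly, smul_eq_C_mul]; ring
  rw [expand, BF_add_left, BF_smul_left, BF_add_left, BF_X_mul, BF_X_mul, BF_X_mul, BF_X_mul,
    BF_X_mul, BF_X_mul, fischerOp, BF_add_right,
    show (MvPolynomial.C ((lam l : ℝ) : ℂ)) *
        (pderiv (Sum.inl l) (pderiv (Sum.inl l) Q) + pderiv (Sum.inr l) (pderiv (Sum.inr l) Q))
      = ((lam l : ℂ)) • (pderiv (Sum.inl l) (pderiv (Sum.inl l) Q)
        + pderiv (Sum.inr l) (pderiv (Sum.inr l) Q)) from (smul_eq_C_mul _ _).symm,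
    BF_smul_right, BF_add_right, pderiv_pderiv_comm (Sum.inr l) (Sum.inl l)]

end Specialized

/-- **simultaneous generalized Fischer decomposition.** Let `N ≥ 1` and
`0 < λ_l < 1/2` for all `l`. For every `p ≥ 2` and every homogeneous polynomial `P` of degree
`p` there exist homogeneous `A_1,…,A_N` of degree `p−2` and a homogeneous `P₀` of degree `p`
with `P = Σ_l A_l·q_l + P₀` and `T_l(P₀) = 0` for every `l`. -/
theorem simultaneous_fischer_decomposition (N : ℕ) (hN : 1 ≤ N)
    (lam : Fin N → ℝ) (hlam : ∀ l, 0 < lam l ∧ lam l < 1 / 2)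
    (p : ℕ) (hp : 2 ≤ p)
    (P : MvPolynomial (Fin N ⊕ Fin N) ℂ) (hP : P.IsHomogeneous p) :
    ∃ (A : Fin N → MvPolynomial (Fin N ⊕ Fin N) ℂ) (P₀ : MvPolynomial (Fin N ⊕ Fin N) ℂ),
      (∀ l, (A l).IsHomogeneous (p - 2)) ∧ P₀.IsHomogeneous p ∧
      P = (∑ l : Fin N, A l * qPoly N lam l) + P₀ ∧
      ∀ l, fischerOp N lam l P₀ = 0 := by
  classical
  set V : Submodule ℂ (MvPolynomial (Fin N ⊕ Fin N) ℂ) :=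
    homogeneousSubmodule (Fin N ⊕ Fin N) ℂ p with hVdef
  haveI : FiniteDimensional ℂ V :=
    Submodule.finiteDimensional_of_le (S₂ := restrictTotalDegree (Fin N ⊕ Fin N) ℂ p)
      (fun x hx => (mem_restrictTotalDegree _ _ _).2 (MvPolynomial.IsHomogeneous.totalDegree_le hx))
  set BV : LinearMap.BilinForm ℂ V := LinearMap.mk₂ ℂ (fun x y => FischerAux.BF x.1 y.1)
    (fun x x' y => FischerAux.BF_add_left x.1 x'.1 y.1)
    (fun c x y => FischerAux.BF_smul_left c x.1 y.1)
    (fun x y y' => FischerAux.BF_add_right x.1 y.1 y'.1)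
    (fun c x y => FischerAux.BF_smul_right c x.1 y.1) with hBVdef
  set U : Submodule ℂ V :=
    { carrier := {x : V | ∃ A : Fin N → MvPolynomial (Fin N ⊕ Fin N) ℂ,
        (∀ l, (A l).IsHomogeneous (p - 2)) ∧
        (x : MvPolynomial (Fin N ⊕ Fin N) ℂ) = ∑ l, A l * qPoly N lam l}
      zero_mem' := ⟨fun _ => 0, fun l => isHomogeneous_zero _ _ _, by simp⟩
      add_mem' := by
        rintro x y ⟨A, hA, hx⟩ ⟨B, hB, hy⟩
        refine ⟨fun l => A l + B l, fun l => (hA l).add (hB l), ?_⟩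
        push_cast [hx, hy]
        rw [← Finset.sum_add_distrib]
        exact Finset.sum_congr rfl fun l _ => by ring
      smul_mem' := by
        rintro c x ⟨A, hA, hx⟩
        refine ⟨fun l => c • A l, fun l => (homogeneousSubmodule _ ℂ (p-2)).smul_mem c (hA l), ?_⟩
        push_cast [hx]
        rw [Finset.smul_sum]
        exact Finset.sum_congr rfl fun l _ => (smul_mul_assoc c _ _).symm } with hUdef
  have hrefl : BV.IsRefl := by
    intro x y h
    have : FischerAux.BF x.1 y.1 = 0 := h
    show FischerAux.BF y.1 x.1 = 0
    rwa [FischerAux.BF_comm y.1 x.1]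
  have hnd : (BV.restrict U).Nondegenerate := by
    refine (LinearMap.IsRefl.nondegenerate_iff_separatingLeft (B := BV.restrict U) (fun (x y : U) h => hrefl x.1 y.1 h)).2 ?_
    intro x hx
    obtain ⟨A, hA, hxA⟩ := x.2
    have hconjV : (MvPolynomial.map (starRingEnd ℂ) ((x : V) : MvPolynomial (Fin N ⊕ Fin N) ℂ))
        ∈ V := FischerAux.isHomog_map_conj (x : V).2
    have hconjU : (⟨_, hconjV⟩ : V) ∈ U := by
      refine ⟨fun l => MvPolynomial.map (starRingEnd ℂ) (A l),
        fun l => FischerAux.isHomog_map_conj (hA l), ?_⟩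
      show MvPolynomial.map (starRingEnd ℂ) ((x : V) : MvPolynomial (Fin N ⊕ Fin N) ℂ) = _
      rw [hxA, map_sum]
      exact Finset.sum_congr rfl fun l _ => by rw [map_mul, map_conj_qPoly]
    have h0 := hx ⟨_, hconjU⟩
    have h1 : FischerAux.BF ((x : V) : MvPolynomial (Fin N ⊕ Fin N) ℂ)
        (MvPolynomial.map (starRingEnd ℂ) ((x : V) : MvPolynomial (Fin N ⊕ Fin N) ℂ)) = 0 := h0
    rw [FischerAux.BF_comm] at h1
    have h2 := FischerAux.eq_zero_of_BF_conj_self _ h1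
    exact Subtype.ext (Subtype.ext h2)
  have hcompl := LinearMap.BilinForm.isCompl_orthogonal_of_restrict_nondegenerate hrefl hnd
  have hPV : P ∈ V := hP
  have hmem : (⟨P, hPV⟩ : V) ∈ U ⊔ BV.orthogonal U := by
    rw [hcompl.sup_eq_top]; trivial
  obtain ⟨u, hu, z, hz, huz⟩ := Submodule.mem_sup.1 hmem
  obtain ⟨A, hA, huA⟩ := hu
  refine ⟨A, (z : MvPolynomial (Fin N ⊕ Fin N) ℂ), hA, z.2, ?_, ?_⟩
  · have := congrArg (Subtype.val : V → MvPolynomial (Fin N ⊕ Fin N) ℂ) huz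
    rw [Submodule.coe_add, huA] at this
    exact this.symm
  · intro l
    set Q := fischerOp N lam l (z : MvPolynomial (Fin N ⊕ Fin N) ℂ) with hQdef
    have hQhom : Q.IsHomogeneous (p - 2) := fischerOp_homog z.2 l
    set A₀ := MvPolynomial.map (starRingEnd ℂ) Q with hA₀def
    have hA₀ : A₀.IsHomogeneous (p - 2) := FischerAux.isHomog_map_conj hQhom
    have hxV : A₀ * qPoly N lam l ∈ V := by
      have := hA₀.mul (qPoly_homog (lam := lam) l)
      rwa [Nat.sub_add_cancel hp] at this
    have hxU : (⟨A₀ * qPoly N lam l, hxV⟩ : V) ∈ U := by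
      refine ⟨fun m => if m = l then A₀ else 0, fun m => ?_, ?_⟩
      · show (if m = l then A₀ else 0).IsHomogeneous (p - 2)
        rcases eq_or_ne m l with hm | hm
        · rw [if_pos hm]; exact hA₀
        · rw [if_neg hm]; exact isHomogeneous_zero _ _ _
      · show A₀ * qPoly N lam l = ∑ m, (if m = l then A₀ else 0) * qPoly N lam m
        simp [ite_mul]
    have h0 : BV ⟨A₀ * qPoly N lam l, hxV⟩ z = 0 := hz _ hxU
    have h1 : FischerAux.BF (A₀ * qPoly N lam l) (z : MvPolynomial (Fin N ⊕ Fin N) ℂ) = 0 := h0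
    rw [mul_comm, BF_q_mul] at h1
    exact FischerAux.eq_zero_of_BF_conj_self Q h1
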